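/- Let H = L + D where L is the Laplacian of a directed graph G on nodes {1,...,N} and D = diag(d₁,...,d_N) with d_i ∈ {0,1}. Let L̄ be the Laplacian of the extended graph Ḡ on nodes {0,1,...,N} obtained by adding the leader node 0 with an edge (0,i) exactly when d_i = 1. If Ḡ is connected in the sense that node 0 is reachable to every other node by a directed path, then H is invertible (rank H = N). -/

import Mathlib

open Matrix Finset

/-- let `H = L + D` where `L` is the in-degree Laplacian of a directed
graph on follower nodes `{1,…,N}` (adjacency `a`, with `a i j = 1` iff `(j,i)` is an
edge) and `D = diag d` records the edges from the leader node `0`.  If in the extended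
graph node `0` is reachable to every other node by a directed path, then `H` is
invertible. -/
theorem structure_matrix_invertible_of_connected {N : ℕ}
    (a : Fin N → Fin N → ℝ) (ha : ∀ i j, a i j = 0 ∨ a i j = 1) (ha0 : ∀ i, a i i = 0)
    (d : Fin N → ℝ) (hd : ∀ i, d i = 0 ∨ d i = 1)
    (hconn : ∀ i : Fin N,
      Relation.ReflTransGen
        (fun u v : Option (Fin N) =>
          match u, v with
          | none, some i => d i = 1
          | some j, some i => a i j = 1
          | _, none => False)
        none (some i)) :
    IsUnit (Matrix.diagonal (fun i => ∑ j ∈ Finset.univ.erase i, a i j) - Matrix.of a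
          + Matrix.diagonal d) := by
  set c : Fin N → ℝ := fun i => ∑ j ∈ Finset.univ.erase i, a i j with hc
  rw [Matrix.isUnit_iff_isUnit_det, isUnit_iff_ne_zero]
  intro hdet
  obtain ⟨v, hv, hmv⟩ := Matrix.exists_mulVec_eq_zero_iff.mpr hdet
  obtain ⟨i0, hi0⟩ := Function.ne_iff.mp hv
  have hne : (Finset.univ : Finset (Fin N)).Nonempty := ⟨i0, Finset.mem_univ i0⟩
  set M : ℝ := Finset.univ.sup' hne (fun i => |v i|) with hM
  have hle : ∀ j, |v j| ≤ M := fun j => by rw [hM]; exact Finset.le_sup' (fun i => |v i|) (Finset.mem_univ j)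
  have hMpos : 0 < M := lt_of_lt_of_le (abs_pos.mpr hi0) (hle i0)
  have hanneg : ∀ i j, 0 ≤ a i j := fun i j => by rcases ha i j with h | h <;> simp [h]
  have hcnneg : ∀ i, 0 ≤ c i := fun i => Finset.sum_nonneg fun j _ => hanneg i j
  have hdnneg : ∀ i, 0 ≤ d i := fun i => by rcases hd i with h | h <;> simp [h]
  -- row equation
  have hrow : ∀ i, (c i + d i) * v i = ∑ j ∈ Finset.univ.erase i, a i j * v j := by
    intro i
    have h0 := congrFun hmv i
    simp only [Matrix.mulVec, dotProduct, Matrix.add_apply, Matrix.sub_apply,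
      Matrix.diagonal_apply, Matrix.of_apply, Pi.zero_apply] at h0
    have h1 : ∑ j, ((if i = j then c i else 0) - a i j + (if i = j then d i else 0)) * v j
        = (c i + d i) * v i - ∑ j, a i j * v j := by
      simp only [sub_mul, add_mul, ite_mul, zero_mul]
      rw [Finset.sum_add_distrib, Finset.sum_sub_distrib, Finset.sum_ite_eq,
        Finset.sum_ite_eq]
      simp only [Finset.mem_univ, if_true]
      ring
    rw [h1] at h0
    have h2 : ∑ j ∈ Finset.univ.erase i, a i j * v j = ∑ j, a i j * v j :=
      Finset.sum_erase _ (by simp [ha0 i])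
    rw [h2]
    linarith
  -- maximum principle
  have key : ∀ i, |v i| = M → d i = 0 ∧ ∀ j, a i j = 1 → |v j| = M := by
    intro i hiM
    have h1 : (c i + d i) * M ≤ ∑ j ∈ Finset.univ.erase i, a i j * |v j| :=
      calc (c i + d i) * M = |(c i + d i) * v i| := by
            rw [abs_mul, abs_of_nonneg (add_nonneg (hcnneg i) (hdnneg i)), hiM]
        _ = |∑ j ∈ Finset.univ.erase i, a i j * v j| := by rw [hrow i]
        _ ≤ ∑ j ∈ Finset.univ.erase i, |a i j * v j| := Finset.abs_sum_le_sum_abs _ _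
        _ = ∑ j ∈ Finset.univ.erase i, a i j * |v j| := by
            refine Finset.sum_congr rfl fun j _ => ?_
            rw [abs_mul, abs_of_nonneg (hanneg i j)]
    have hle' : ∀ j ∈ Finset.univ.erase i, a i j * |v j| ≤ a i j * M :=
      fun j _ => mul_le_mul_of_nonneg_left (hle j) (hanneg i j)
    have h2 : ∑ j ∈ Finset.univ.erase i, a i j * |v j| ≤ c i * M :=
      calc ∑ j ∈ Finset.univ.erase i, a i j * |v j|
          ≤ ∑ j ∈ Finset.univ.erase i, a i j * M := Finset.sum_le_sum hle'
        _ = c i * M := (Finset.sum_mul _ _ _).symm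
    have hdi : d i = 0 := by
      rcases hd i with h | h
      · exact h
      · exfalso
        have := h1.trans h2
        rw [h] at this
        nlinarith
    refine ⟨hdi, fun j haj => ?_⟩
    by_cases hji : j = i
    · rw [hji]; exact hiM
    · have h1' : c i * M ≤ ∑ j ∈ Finset.univ.erase i, a i j * |v j| := by
        rw [hdi, add_zero] at h1; exact h1
      have hsum : ∑ j ∈ Finset.univ.erase i, a i j * |v j|
          = ∑ j ∈ Finset.univ.erase i, a i j * M := by
        apply le_antisymm (Finset.sum_le_sum hle')
        rw [← Finset.sum_mul]
        exact h1'
      have heq := (Finset.sum_eq_sum_iff_of_le hle').mp hsum j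
        (Finset.mem_erase.mpr ⟨hji, Finset.mem_univ j⟩)
      rw [haj, one_mul, one_mul] at heq
      exact heq
  -- induct along the path from the leader
  have path : ∀ b, Relation.ReflTransGen
      (fun u w : Option (Fin N) =>
        match u, w with
        | none, some i => d i = 1
        | some j, some i => a i j = 1
        | _, none => False) none b → ∀ i, b = some i → |v i| = M → False := by
    intro b hb
    induction hb with
    | refl => intro i h; exact nomatch h
    | @tail b' e hb' step ih =>
      rintro i rfl hiM
      cases b' with
      | none =>
        have hd1 : d i = 1 := step
        rw [(key i hiM).1] at hd1
        norm_num at hd1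
      | some j =>
        have ha1 : a i j = 1 := step
        exact ih j rfl ((key i hiM).2 j ha1)
  obtain ⟨imax, -, himax⟩ := Finset.exists_mem_eq_sup' hne (fun i => |v i|)
  exact path _ (hconn imax) imax rfl himax.symm
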